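/- Let K be a finite field of order q and S a sharply transitive subset of PGL(2,K) on P^1(K) containing the identity. For any g, h ∈ S \ {1}, there exists k ∈ S with k ≠ g and k ≠ h such that the element g^{-1} k h^{-1} fixes at least two distinct points of P^1(K). -/

import Mathlib

open Matrix Projectivization

noncomputable section

variable {K : Type*} [Field K]

/-- The projective line over `K`. -/
abbrev P1 (K : Type*) [Field K] := Projectivization K (Fin 2 → K)

/-- `PGL(2,K)`, the quotient of `GL(2,K)` by its center. -/
abbrev PGL2 (K : Type*) [Field K] :=
  GL (Fin 2) K ⧸ Subgroup.center (GL (Fin 2) K)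

/-- The canonical projection `GL(2,K) → PGL(2,K)`. -/
def PGL2.proj (K : Type*) [Field K] : GL (Fin 2) K →* PGL2 K :=
  QuotientGroup.mk' _

instance glAction : MulAction (GL (Fin 2) K) (P1 K) where
  smul g x := x.map ((Matrix.GeneralLinearGroup.toLin g).toLinearEquiv : (Fin 2 → K) →ₗ[K] (Fin 2 → K))
    (Matrix.GeneralLinearGroup.toLin g).toLinearEquiv.injective
  one_smul x := by
    induction x using Projectivization.ind with
    | h v hv =>
      show Projectivization.map _ _ _ = _
      rw [Projectivization.map_mk]
      congr 1
      rw [_root_.map_one]; rfl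
  mul_smul g h x := by
    induction x using Projectivization.ind with
    | h v hv =>
      show Projectivization.map _ _ _ = Projectivization.map _ _ (Projectivization.map _ _ _)
      rw [Projectivization.map_mk, Projectivization.map_mk, Projectivization.map_mk]
      congr 1
      show ((↑g : Matrix (Fin 2) (Fin 2) K) * (↑h : Matrix (Fin 2) (Fin 2) K)) *ᵥ v = (↑g : Matrix (Fin 2) (Fin 2) K) *ᵥ ((↑h : Matrix (Fin 2) (Fin 2) K) *ᵥ v)
      rw [Matrix.mulVec_mulVec]

theorem gl_smul_mk (g : GL (Fin 2) K) (v : Fin 2 → K) (hv : v ≠ 0) :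
    g • Projectivization.mk K v hv =
      Projectivization.mk K ((↑g : Matrix (Fin 2) (Fin 2) K) *ᵥ v)
        ((Matrix.GeneralLinearGroup.toLin g).toLinearEquiv.map_ne_zero_iff.mpr hv) := by
  show Projectivization.map _ _ _ = _
  rw [Projectivization.map_mk]
  rfl

theorem center_smul_eq (g : GL (Fin 2) K) (hg : g ∈ Subgroup.center (GL (Fin 2) K)) (x : P1 K) :
    g • x = x := by
  have hcomm : ∀ B : GL (Fin 2) K, B * g = g * B := fun B => Subgroup.mem_center_iff.mp hg B
  have key : ∀ M : Matrix (Fin 2) (Fin 2) K, M.det ≠ 0 →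
      M * (↑g : Matrix (Fin 2) (Fin 2) K) = (↑g : Matrix (Fin 2) (Fin 2) K) * M := by
    intro M hM
    have := hcomm (Matrix.GeneralLinearGroup.mkOfDetNeZero M hM)
    exact congrArg Units.val this
  have h1 : !![(1:K),1;0,1] * (↑g : Matrix (Fin 2) (Fin 2) K) = (↑g : Matrix (Fin 2) (Fin 2) K) * !![(1:K),1;0,1] := key _ (by simp [Matrix.det_fin_two_of])
  have h2 : !![(1:K),0;1,1] * (↑g : Matrix (Fin 2) (Fin 2) K) = (↑g : Matrix (Fin 2) (Fin 2) K) * !![(1:K),0;1,1] := key _ (by simp [Matrix.det_fin_two_of])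
  have e1 := fun i j => congrFun (congrFun h1 i) j
  have e2 := fun i j => congrFun (congrFun h2 i) j
  have hc : (↑g : Matrix (Fin 2) (Fin 2) K) 1 0 = 0 := by
    have := e1 0 0
    simp [Matrix.mul_apply, Fin.sum_univ_two] at this
    linear_combination this
  have hb : (↑g : Matrix (Fin 2) (Fin 2) K) 0 1 = 0 := by
    have := e2 1 1
    simp [Matrix.mul_apply, Fin.sum_univ_two] at this
    linear_combination this
  have had : (↑g : Matrix (Fin 2) (Fin 2) K) 0 0 = (↑g : Matrix (Fin 2) (Fin 2) K) 1 1 := by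
    have := e1 0 1
    simp [Matrix.mul_apply, Fin.sum_univ_two] at this
    linear_combination -this
  -- so A is scalar
  induction x using Projectivization.ind with
  | h v hv =>
    rw [gl_smul_mk]
    apply (Projectivization.mk_eq_mk_iff' ..).mpr
    refine ⟨(↑g : Matrix (Fin 2) (Fin 2) K) 0 0, ?_⟩
    funext i
    fin_cases i <;>
      simp [Matrix.mulVec, dotProduct, Fin.sum_univ_two, hc, hb, ← had, mul_comm]

instance pglAction : MulAction (PGL2 K) (P1 K) :=
  MulAction.compHom _ (QuotientGroup.lift (Subgroup.center (GL (Fin 2) K))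
    (MulAction.toPermHom (GL (Fin 2) K) (P1 K))
    (fun g hg => by
      ext x
      exact center_smul_eq g hg x))

/-- A subset `S` of `PGL(2,K)` is sharply transitive (regular) on the projective line if
for all `x, y` there is a unique `g ∈ S` with `g • x = y`. -/
def SharplyTransitive (S : Set (PGL2 K)) : Prop :=
  ∀ x y : P1 K, ∃! g : PGL2 K, g ∈ S ∧ g • x = y

/-- The point `(1 : 0)` of the projective line. -/
def pt10 (K : Type*) [Field K] : P1 K :=
  Projectivization.mk K ![1, 0] (by intro h; simpa using congrFun h 0)

/-- The point `(0 : 1)` of the projective line. -/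
def pt01 (K : Type*) [Field K] : P1 K :=
  Projectivization.mk K ![0, 1] (by intro h; simpa using congrFun h 1)

theorem exists_k_with_two_fixed_points
    {K : Type*} [Field K] [Fintype K] (S : Set (PGL2 K)) (hS : SharplyTransitive S)
    (h1 : (1 : PGL2 K) ∈ S) (g h : PGL2 K) (hg : g ∈ S) (hh : h ∈ S)
    (hg1 : g ≠ 1) (hh1 : h ≠ 1) :
    ∃ k ∈ S, k ≠ g ∧ k ≠ h ∧
      ∃ x y : P1 K, x ≠ y ∧ (g⁻¹ * k * h⁻¹) • x = x ∧ (g⁻¹ * k * h⁻¹) • y = y := by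
  classical
  have hP1fin : Finite (P1 K) :=
    Finite.of_surjective (fun v : {v : Fin 2 → K // v ≠ 0} => Projectivization.mk K v.1 v.2)
      (fun x => by
        induction x using Projectivization.ind with
        | h v hv => exact ⟨⟨v, hv⟩, rfl⟩)
  have fpf : ∀ s : PGL2 K, s ∈ S → s ≠ 1 → ∀ x : P1 K, s • x ≠ x := by
    intro s hs hs1 x hx
    exact hs1 ((hS x x).unique ⟨hs, hx⟩ ⟨h1, one_smul _ _⟩)
  choose F hFS hFeq using fun x : P1 K => (hS (h⁻¹ • x) (g • x)).exists
  have hFg : ∀ x, F x ≠ g := by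
    intro x hFx
    have heq := hFeq x
    rw [hFx] at heq
    have hinv : h⁻¹ • x = x := smul_left_cancel g heq
    have : h • x = x := by
      conv_lhs => rw [← hinv]
      rw [smul_inv_smul]
    exact fpf h hh hh1 x this
  have hFh : ∀ x, F x ≠ h := by
    intro x hFx
    have : x = g • x := by
      have := hFeq x
      rwa [hFx, smul_inv_smul] at this
    exact fpf g hg hg1 x this.symm
  -- card S = card P1
  have hcardS : Nat.card ↥S = Nat.card (P1 K) := by
    refine Nat.card_eq_of_bijective (fun s : S => (s : PGL2 K) • pt10 K) ⟨?_, ?_⟩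
    · intro s t hst
      exact Subtype.ext ((hS (pt10 K) ((s : PGL2 K) • pt10 K)).unique ⟨s.2, rfl⟩ ⟨t.2, hst.symm⟩)
    · intro y
      obtain ⟨k, ⟨hk, hky⟩, -⟩ := hS (pt10 K) y
      exact ⟨⟨k, hk⟩, hky⟩
  have hsub : (S \ {g, h} : Set (PGL2 K)) ⊂ S :=
    ⟨Set.diff_subset, fun hsup => (hsup hg).2 (Or.inl rfl)⟩
  have hlt : Nat.card ↥(S \ {g, h} : Set (PGL2 K)) < Nat.card (P1 K) := by
    rw [← hcardS]
    have hn := Set.ncard_lt_ncard hsub (Set.toFinite S)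
    rwa [← Nat.card_coe_set_eq, ← Nat.card_coe_set_eq] at hn
  have hmem : ∀ x : P1 K, F x ∈ (S \ {g, h} : Set (PGL2 K)) := fun x =>
    ⟨hFS x, by simp [hFg x, hFh x]⟩
  have hPGLfin : Finite (PGL2 K) := Quotient.finite _
  have hninj : ¬ Function.Injective
      (fun x : P1 K => (⟨F x, hmem x⟩ : ↥(S \ {g, h} : Set (PGL2 K)))) := fun hinj =>
    absurd (Nat.card_le_card_of_injective _ hinj) (not_le.mpr hlt)
  obtain ⟨x, y, hfe, hxy⟩ := Function.not_injective_iff.mp hninj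
  have hFxy : F x = F y := congrArg Subtype.val hfe
  refine ⟨F x, hFS x, hFg x, hFh x, x, y, hxy, ?_, ?_⟩
  · rw [mul_smul, mul_smul, hFeq x, inv_smul_smul]
  · rw [mul_smul, mul_smul, hFxy, hFeq y, inv_smul_smul]


end
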